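/- Let φ be an s-model of a finite tree T with maximum degree at most 4, let v be a vertex of T, and let b_φ(v) denote the maximum of b_φ(Q) over all leaf-to-leaf paths Q of T containing v. If v is not balanced in φ, then b_φ(v) = b^1 + b^2 + 1, where b^1 and b^2 are the two largest values among b^ℓ_φ(v,u) over the neighbors u of v. -/

import Mathlib

open SimpleGraph

/-- The closed axis-parallel grid segment (bounding box) with corners `p` and `q`.
For axis-aligned `p`, `q` this is exactly the straight segment joining them. -/
def seg (p q : ℤ × ℤ) : Set (ℤ × ℤ) :=
  {r | r.1 ∈ Set.uIcc p.1 q.1 ∧ r.2 ∈ Set.uIcc p.2 q.2}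

/-- A straight model (s-model) of a graph `G`: an injective drawing of the vertices on the
grid `ℤ × ℤ` such that every edge is a horizontal or vertical straight segment, and segments
of distinct edges meet only at the image of a common endpoint. -/
structure SModel {V : Type*} (G : SimpleGraph V) where
  toFun : V → ℤ × ℤ
  inj : Function.Injective toFun
  axisAligned : ∀ ⦃u v : V⦄, G.Adj u v →
    ((toFun u).1 = (toFun v).1 ∧ (toFun u).2 ≠ (toFun v).2) ∨
    ((toFun u).2 = (toFun v).2 ∧ (toFun u).1 ≠ (toFun v).1)
  noCross : ∀ ⦃u v x y : V⦄, G.Adj u v → G.Adj x y → s(u, v) ≠ s(x, y) →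
    ∀ r ∈ seg (toFun u) (toFun v) ∩ seg (toFun x) (toFun y),
      ∃ w : V, (w = u ∨ w = v) ∧ (w = x ∨ w = y) ∧ toFun w = r

/-- The drawing `φ` bends at `b` when passing `a, b, c`: one of the two segments is
vertical and the other horizontal. -/
def bendAt {V : Type*} (φ : V → ℤ × ℤ) (a b c : V) : Prop :=
  ((φ a).1 = (φ b).1 ∧ (φ b).2 = (φ c).2) ∨
  ((φ a).2 = (φ b).2 ∧ (φ b).1 = (φ c).1)

instance {V : Type*} (φ : V → ℤ × ℤ) (a b c : V) : Decidable (bendAt φ a b c) := by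
  unfold bendAt; infer_instance

/-- The list of internal vertices, in order, at which the drawing of the given vertex list
bends. -/
def bendVertices {V : Type*} (φ : V → ℤ × ℤ) : List V → List V
  | a :: b :: c :: rest =>
      (if bendAt φ a b c then [b] else []) ++ bendVertices φ (b :: c :: rest)
  | _ => []

/-- The number of bends of (the drawing of) a vertex list. -/
def bends {V : Type*} (φ : V → ℤ × ℤ) (L : List V) : ℕ :=
  (bendVertices φ L).length

section Defs

variable {V : Type*} [Fintype V]

/-- `b(φ)`: the maximum number of bends over all leaf-to-leaf paths (0 if there are none). -/
noncomputable def bendNum {G : SimpleGraph V} [DecidableRel G.Adj] (M : SModel G) : ℕ :=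
  sSup {n | ∃ (a b : V) (W : G.Walk a b), W.IsPath ∧ G.degree a = 1 ∧ G.degree b = 1 ∧
    bends M.toFun W.support = n}

/-- `b(T)`: the minimum of `b(φ)` over all s-models `φ`. -/
noncomputable def treeBendNum (G : SimpleGraph V) [DecidableRel G.Adj] : ℕ :=
  sInf {n | ∃ M : SModel G, bendNum M = n}

/-- `b^ℓ_φ(p, v)`: the maximum number of bends over all paths from `p` to a leaf that
contain `v`. -/
noncomputable def leafBend {G : SimpleGraph V} [DecidableRel G.Adj] (M : SModel G)
    (p v : V) : ℕ :=
  sSup {n | ∃ (f : V) (W : G.Walk p f), W.IsPath ∧ G.degree f = 1 ∧ v ∈ W.support ∧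
    bends M.toFun W.support = n}

/-- `b^ℓ_T(p, v)`: the minimum of `b^ℓ_φ(p, v)` over all s-models `φ`. -/
noncomputable def leafBendMin (G : SimpleGraph V) [DecidableRel G.Adj] (p v : V) : ℕ :=
  sInf {n | ∃ M : SModel G, leafBend M p v = n}

/-- `b_φ(v)`: the maximum number of bends over all leaf-to-leaf paths containing `v`. -/
noncomputable def bendNumAt {G : SimpleGraph V} [DecidableRel G.Adj] (M : SModel G)
    (v : V) : ℕ :=
  sSup {n | ∃ (a b : V) (W : G.Walk a b), W.IsPath ∧ G.degree a = 1 ∧ G.degree b = 1 ∧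
    v ∈ W.support ∧ bends M.toFun W.support = n}

/-- `p`, `q`, `r` lie on a common horizontal or vertical grid line. -/
def collinearGrid (p q r : ℤ × ℤ) : Prop :=
  (p.1 = q.1 ∧ q.1 = r.1) ∨ (p.2 = q.2 ∧ q.2 = r.2)

/-- `v` is balanced in the s-model `M`: either it has degree at most 1, or two neighbors
realizing the two largest values of `b^ℓ_M(v, ·)` are drawn collinearly with `v`. -/
def BalancedAt {G : SimpleGraph V} [DecidableRel G.Adj] (M : SModel G) (v : V) : Prop :=
  G.degree v ≤ 1 ∨
  ∃ u1 u2 : V, u1 ≠ u2 ∧ G.Adj v u1 ∧ G.Adj v u2 ∧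
    collinearGrid (M.toFun u1) (M.toFun v) (M.toFun u2) ∧
    ∀ w : V, G.Adj v w → w ≠ u1 → w ≠ u2 →
      leafBend M v w ≤ min (leafBend M v u1) (leafBend M v u2)

/-- The value `b^ℓ_M(v, u)` of a real or virtual (`none`) neighbor `u` of `v`; virtual
neighbors have value `-1`. -/
noncomputable def optVal {G : SimpleGraph V} [DecidableRel G.Adj] (M : SModel G) (v : V) :
    Option V → ℤ
  | none => -1
  | some u => (leafBend M v u : ℤ)

/-- `u1` and `u2` are the first two entries of a nonincreasing (w.r.t. `b^ℓ_M(v, ·)`)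
ordering of the real neighbors of `v` other than `p`, padded at the end with virtual
neighbors `none`. -/
def TopTwo {G : SimpleGraph V} [DecidableRel G.Adj] (M : SModel G) (p v : V) :
    Option V → Option V → Prop
  | none, u2 => u2 = none ∧ ∀ w, G.Adj v w → w = p
  | some a, none => G.Adj v a ∧ a ≠ p ∧ ∀ w, G.Adj v w → w ≠ p → w = a
  | some a, some b => G.Adj v a ∧ a ≠ p ∧ G.Adj v b ∧ b ≠ p ∧ a ≠ b ∧
      leafBend M v b ≤ leafBend M v a ∧
      ∀ w, G.Adj v w → w ≠ p → w ≠ a → w ≠ b → leafBend M v w ≤ leafBend M v b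

/-- Criticality of an ordered pair in an s-model `M`: every pair `(p, ∅)` is critical, and an
ordered edge `(p, v)` is critical if, for the first two entries `u1, u2` of some nonincreasing
ordering of the other neighbors of `v`, either `b^ℓ_M(p,v) = b^1` and `(v, u1)` is critical, or
`b^ℓ_M(p,v) = b^2 + 1` and both `(v, u1)` and `(v, u2)` are critical. -/
inductive Critical {G : SimpleGraph V} [DecidableRel G.Adj] (M : SModel G) :
    V → Option V → Prop
  | base (p : V) : Critical M p none
  | top1 (p v : V) (u1 u2 : Option V) (hadj : G.Adj p v)
      (htop : TopTwo M p v u1 u2)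
      (hb : (leafBend M p v : ℤ) = optVal M v u1)
      (hc : Critical M v u1) : Critical M p (some v)
  | top2 (p v : V) (u1 u2 : Option V) (hadj : G.Adj p v)
      (htop : TopTwo M p v u1 u2)
      (hb : (leafBend M p v : ℤ) = optVal M v u2 + 1)
      (hc1 : Critical M v u1) (hc2 : Critical M v u2) : Critical M p (some v)

end Defs

/-- Membership in the class of trees of the statement: a tree with maximum degree at most 4
having a vertex `r` of degree exactly 2 with distinct neighbors `r1`, `r2`, admitting a
balanced s-model `M` with `b^ℓ_M(r,r1) = b^ℓ_M(r,r2) = k - 1`. -/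
def ClassProp (k : ℕ) (V : Type) [Fintype V] (G : SimpleGraph V)
    [DecidableRel G.Adj] : Prop :=
  G.IsTree ∧ (∀ v, G.degree v ≤ 4) ∧
  ∃ (r r1 r2 : V) (M : SModel G),
    G.degree r = 2 ∧ G.Adj r r1 ∧ G.Adj r r2 ∧ r1 ≠ r2 ∧
    (∀ v, BalancedAt M v) ∧ leafBend M r r1 = k - 1 ∧ leafBend M r r2 = k - 1

/-- The full binary tree of height `k`, with vertex set the lists over `Bool` of length at
most `k`, rooted at the empty list; children of `l` are the lists `c :: l`. -/
def fullBinTree (k : ℕ) : SimpleGraph {l : List Bool // l.length ≤ k} :=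
  SimpleGraph.fromRel (fun a b => ∃ c : Bool, (b : List Bool) = c :: (a : List Bool))

/-- A tree with maximum degree at most 4 and minimum bend number `k`. -/
def TreeProp (k : ℕ) (V : Type) [Fintype V] (G : SimpleGraph V)
    [DecidableRel G.Adj] : Prop :=
  G.IsTree ∧ (∀ v, G.degree v ≤ 4) ∧ treeBendNum G = k

/-- The grid graph on `ℤ × ℤ`: two grid points are adjacent iff their distance is 1. -/
def gridGraph : SimpleGraph (ℤ × ℤ) :=
  SimpleGraph.fromRel (fun p q =>
    (p.1 = q.1 ∧ (p.2 - q.2).natAbs = 1) ∨ (p.2 = q.2 ∧ (p.1 - q.1).natAbs = 1))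

/-- `G` is a `B_k`-EPG graph: it has an EPG model by grid paths each with at most `k` bends;
distinct vertices are adjacent iff the corresponding grid paths share a grid edge. -/
def IsBkEPG {X : Type*} (G : SimpleGraph X) (k : ℕ) : Prop :=
  ∃ (s t : X → ℤ × ℤ) (P : ∀ x : X, gridGraph.Walk (s x) (t x)),
    (∀ x, (P x).IsPath) ∧ (∀ x, bends (id : ℤ × ℤ → ℤ × ℤ) (P x).support ≤ k) ∧
    ∀ x y : X, x ≠ y → (G.Adj x y ↔ ∃ e, e ∈ (P x).edges ∧ e ∈ (P y).edges)

/-- `⟨T, (Q x)_{x}⟩` is a VPT model of `G`: the `Q x` are pairwise distinct paths of the host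
tree `T`, and distinct vertices of `G` are adjacent iff their paths share a vertex of `T`. -/
def IsVPTModel {X W : Type*} (G : SimpleGraph X) (T : SimpleGraph W)
    (s t : X → W) (Q : ∀ x : X, T.Walk (s x) (t x)) : Prop :=
  (∀ x, (Q x).IsPath) ∧
  (∀ x y : X, x ≠ y → {w : W | w ∈ (Q x).support} ≠ {w : W | w ∈ (Q y).support}) ∧
  (∀ x y : X, x ≠ y → (G.Adj x y ↔ ∃ w : W, w ∈ (Q x).support ∧ w ∈ (Q y).support))

/-- A host tree with maximum degree at most 3 and minimum bend number `k`. -/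
def HostProp (k : ℕ) (W : Type) [Fintype W] (T : SimpleGraph W)
    [DecidableRel T.Adj] : Prop :=
  T.IsTree ∧ (∀ v, T.degree v ≤ 3) ∧ treeBendNum T = k


section BendsLemmas
variable {V : Type*} (φ : V → ℤ × ℤ)

lemma bendAt_comm (a b c : V) : bendAt φ a b c ↔ bendAt φ c b a := by
  unfold bendAt
  constructor <;> rintro (⟨h1, h2⟩ | ⟨h1, h2⟩)
  · exact Or.inr ⟨h2.symm, h1.symm⟩
  · exact Or.inl ⟨h2.symm, h1.symm⟩
  · exact Or.inr ⟨h2.symm, h1.symm⟩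
  · exact Or.inl ⟨h2.symm, h1.symm⟩

lemma bends_pair (a b : V) : bends φ [a, b] = 0 := rfl

lemma bends_cons₂ (x y z : V) (L : List V) :
    bends φ (x :: y :: z :: L) = (if bendAt φ x y z then 1 else 0) + bends φ (y :: z :: L) := by
  simp only [bends, bendVertices, List.length_append, apply_ite List.length]
  split <;> simp

lemma bends_le_length : ∀ L : List V, bends φ L ≤ L.length := by
  intro L
  induction L with
  | nil => exact Nat.zero_le _
  | cons a L ih =>
    cases L with
    | nil => exact Nat.zero_le _
    | cons b L' =>
      cases L' with
      | nil => simp [bends_pair]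
      | cons c R =>
        rw [bends_cons₂]
        have := ih
        simp only [List.length_cons] at *
        split <;> omega

lemma bends_junction (x y z : V) : ∀ (P Q : List V),
    bends φ (P ++ [x, y] ++ z :: Q) =
      bends φ (P ++ [x, y]) + ((if bendAt φ x y z then 1 else 0) + bends φ (y :: z :: Q)) := by
  intro P Q
  induction P with
  | nil => simp [bends_cons₂, bends_pair]
  | cons p P ih =>
    cases P with
    | nil => simp [bends_cons₂, bends_pair]
    | cons q P' =>
      have h2 : ∃ r s1 s2, P' ++ [x, y] ++ z :: Q = r :: s1 ∧ P' ++ [x, y] = r :: s2 := by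
        cases P' with
        | nil => exact ⟨x, _, _, rfl, rfl⟩
        | cons r R => exact ⟨r, _, _, rfl, rfl⟩
      obtain ⟨r, s1, s2, e1, e2⟩ := h2
      simp only [List.cons_append] at ih ⊢ <;> skip
      rw [e1, bends_cons₂, ← e1, e2, bends_cons₂, ← e2]
      omega

lemma bends_concat (x y z : V) (P : List V) :
    bends φ (P ++ [x, y, z]) = bends φ (P ++ [x, y]) + (if bendAt φ x y z then 1 else 0) := by
  have := bends_junction φ x y z P []
  simpa [bends_pair] using this

lemma bends_reverse : ∀ L : List V, bends φ L.reverse = bends φ L := by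
  have aux : ∀ (L : List V) (a b : V), bends φ ((a :: b :: L).reverse) = bends φ (a :: b :: L) := by
    intro L
    induction L with
    | nil => intro a b; simp [bends_pair]
    | cons c L' ih =>
      intro a b
      have e1 : (a :: b :: c :: L').reverse = L'.reverse ++ [c, b, a] := by simp
      have e2 : (b :: c :: L').reverse = L'.reverse ++ [c, b] := by simp
      rw [e1, bends_concat, ← e2, ih b c, bends_cons₂]
      rw [if_congr (bendAt_comm φ c b a) rfl rfl]
      ring
  intro L
  match L with
  | [] => rfl
  | [a] => rfl
  | a :: b :: L => exact aux L a b

end BendsLemmas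

section GraphAux
variable {V : Type*} {G : SimpleGraph V}

lemma walk_cons_of_ne {a b : V} (W : G.Walk a b) (h : a ≠ b) :
    ∃ (s : V) (ha : G.Adj a s) (Q : G.Walk s b), W = Walk.cons ha Q := by
  cases W with
  | nil => exact absurd rfl h
  | cons ha Q => exact ⟨_, ha, Q, rfl⟩

lemma last_edge : ∀ {a b : V} (W : G.Walk a b), W.IsPath → ∀ {x : V}, s(b, x) ∈ W.edges →
    ∃ (q : G.Walk a x) (h : G.Adj x b), W = q.concat h := by
  intro a b W
  induction W with
  | nil => simp
  | @cons a c b h' p ih =>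
    intro hp x hx
    rw [Walk.edges_cons, List.mem_cons] at hx
    rcases hx with hx | hx
    · rw [Sym2.eq_iff] at hx
      rcases hx with ⟨hb, hxc⟩ | ⟨hb, hxa⟩
      · exfalso
        have : a ∉ p.support := ((Walk.cons_isPath_iff h' p).mp hp).2
        exact this (hb ▸ Walk.end_mem_support p)
      · subst hb; subst hxa
        have hnil : p = Walk.nil := Walk.isPath_iff_eq_nil.mp hp.of_cons
        subst hnil
        exact ⟨Walk.nil, h', (Walk.concat_nil h').symm⟩
    · obtain ⟨q, hq, rfl⟩ := ih hp.of_cons hx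
      exact ⟨Walk.cons h' q, hq, by rw [Walk.concat_cons]⟩

lemma second_vertex' (hT : G.IsTree) {v u1 s f : V} (h1 : G.Adj v u1) (ha : G.Adj v s)
    (Q : G.Walk s f) (hp : (Walk.cons ha Q).IsPath) (hu : u1 ∈ Q.support) : s = u1 := by
  classical
  have hq : Q.IsPath := hp.of_cons
  have hv : v ∉ Q.support := ((Walk.cons_isPath_iff ha Q).mp hp).2
  have hP1 : (Walk.cons ha (Q.takeUntil u1 hu)).IsPath := by
    refine (hq.takeUntil hu).cons ?_
    exact fun hmem => hv (Walk.support_takeUntil_subset Q hu hmem)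
  have hP2 : (Walk.cons h1 (Walk.nil : G.Walk u1 u1)).IsPath := by
    rw [Walk.cons_isPath_iff]
    exact ⟨Walk.IsPath.nil, by simp [h1.ne]⟩
  have heq := ((hT.existsUnique_path v u1).unique hP1 hP2)
  have hs := congrArg Walk.support heq
  rw [Walk.support_cons, Walk.support_cons, Walk.support_eq_cons (Q.takeUntil u1 hu)] at hs
  have h' := congrArg (fun l => l.tail.head?) hs
  simp only [List.tail_cons, List.head?_cons] at h'
  exact Option.some.inj h'

lemma paths_disjoint (hT : G.IsTree) {v f1 f2 u1 u2 : V} (h12 : u1 ≠ u2)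
    (ha : G.Adj v u1) (hb : G.Adj v u2) (Q1 : G.Walk u1 f1) (Q2 : G.Walk u2 f2)
    (hp1 : (Walk.cons ha Q1).IsPath) (hp2 : (Walk.cons hb Q2).IsPath) :
    ∀ x, x ∈ Q1.support → x ∈ Q2.support → False := by
  classical
  intro x hx1 hx2
  have hv1 : v ∉ Q1.support := ((Walk.cons_isPath_iff ha Q1).mp hp1).2
  have hv2 : v ∉ Q2.support := ((Walk.cons_isPath_iff hb Q2).mp hp2).2
  have hP1 : (Walk.cons ha (Q1.takeUntil x hx1)).IsPath := by
    refine (hp1.of_cons.takeUntil hx1).cons ?_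
    exact fun hmem => hv1 (Walk.support_takeUntil_subset Q1 hx1 hmem)
  have hP2 : (Walk.cons hb (Q2.takeUntil x hx2)).IsPath := by
    refine (hp2.of_cons.takeUntil hx2).cons ?_
    exact fun hmem => hv2 (Walk.support_takeUntil_subset Q2 hx2 hmem)
  have heq := ((hT.existsUnique_path v x).unique hP1 hP2)
  have hs := congrArg Walk.support heq
  rw [Walk.support_cons, Walk.support_cons, Walk.support_eq_cons (Q1.takeUntil x hx1),
    Walk.support_eq_cons (Q2.takeUntil x hx2)] at hs
  have h' := congrArg (fun l => l.tail.head?) hs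
  simp only [List.tail_cons, List.head?_cons] at h'
  exact h12 (Option.some.inj h')

variable [Fintype V] [DecidableRel G.Adj]

lemma two_le_degree {v u1 u2 : V} (h1 : G.Adj v u1) (h2 : G.Adj v u2) (h12 : u1 ≠ u2) :
    2 ≤ G.degree v := by
  rw [← card_neighborFinset_eq_degree]
  exact Finset.one_lt_card.mpr
    ⟨u1, by simpa using h1, u2, by simpa using h2, h12⟩

lemma exists_two_neighbors {f : V} (h : 2 ≤ G.degree f) :
    ∃ g1 g2, G.Adj f g1 ∧ G.Adj f g2 ∧ g1 ≠ g2 := by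
  rw [← card_neighborFinset_eq_degree] at h
  obtain ⟨g1, hg1, g2, hg2, h12⟩ := Finset.one_lt_card.mp h
  exact ⟨g1, g2, by simpa using hg1, by simpa using hg2, h12⟩

lemma exists_leaf_path (hT : G.IsTree) {v u : V} (h1 : G.Adj v u) :
    ∃ (f : V) (W : G.Walk v f), W.IsPath ∧ G.degree f = 1 ∧ u ∈ W.support := by
  classical
  set S : Set ℕ := {n | ∃ (f : V) (W : G.Walk v f), W.IsPath ∧ u ∈ W.support ∧ W.length = n}
    with hS
  have hbdd : BddAbove S := by
    refine ⟨Fintype.card V, ?_⟩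
    rintro n ⟨f, W, hp, _, rfl⟩
    exact hp.length_lt.le
  have hne : S.Nonempty := by
    refine ⟨1, u, Walk.cons h1 Walk.nil, ?_, by simp, rfl⟩
    rw [Walk.cons_isPath_iff]
    exact ⟨Walk.IsPath.nil, by simp [h1.ne]⟩
  obtain ⟨f, W, hp, hu, hlen⟩ := Nat.sSup_mem hne hbdd
  refine ⟨f, W, hp, ?_, hu⟩
  by_contra hdf
  have hfv : f ≠ v := by
    rintro rfl
    have : W = Walk.nil := Walk.isPath_iff_eq_nil.mp hp
    subst this
    simp at hu
    exact h1.ne' hu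
  obtain ⟨pen, hfp, Qr, hWr⟩ := walk_cons_of_ne W.reverse hfv
  have hd1 : 0 < G.degree f := (G.degree_pos_iff_exists_adj f).mpr ⟨pen, hfp⟩
  have hd2 : 2 ≤ G.degree f := by omega
  have hkey : ∀ g, G.Adj f g → g ∈ W.support → s(f, g) ∈ W.edges := by
    intro g hg hgW
    by_contra hne'
    have hcyc : (Walk.cons hg (W.dropUntil g hgW)).IsCycle := by
      rw [Walk.cons_isCycle_iff]
      exact ⟨hp.dropUntil hgW, fun he => hne' (Walk.edges_dropUntil_subset _ hgW he)⟩
    exact hT.IsAcyclic _ hcyc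
  obtain ⟨g1, g2, hg1, hg2, hgg⟩ := exists_two_neighbors hd2
  have hnotboth : g1 ∉ W.support ∨ g2 ∉ W.support := by
    by_contra hboth
    push_neg at hboth
    obtain ⟨q1, e1, hW1⟩ := last_edge W hp (hkey g1 hg1 hboth.1)
    obtain ⟨q2, e2, hW2⟩ := last_edge W hp (hkey g2 hg2 hboth.2)
    rw [hW1] at hW2
    obtain ⟨hv, -⟩ := Walk.concat_inj hW2
    exact hgg hv
  have hext : ∀ g, G.Adj f g → g ∉ W.support → False := by
    intro g hg hgs
    have hW2p : ((Walk.cons hg.symm W.reverse).reverse).IsPath := by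
      apply Walk.IsPath.reverse
      rw [Walk.cons_isPath_iff]
      exact ⟨hp.reverse, by simpa [Walk.support_reverse] using hgs⟩
    have hmem : (W.length + 1) ∈ S := by
      refine ⟨g, (Walk.cons hg.symm W.reverse).reverse, hW2p, ?_, by simp⟩
      simp [Walk.support_reverse, hu]
    have := le_csSup hbdd hmem
    omega
  rcases hnotboth with h | h
  · exact hext g1 hg1 h
  · exact hext g2 hg2 h

lemma leafBend_bddAbove (M : SModel G) (p u : V) :
    BddAbove {n | ∃ (f : V) (W : G.Walk p f), W.IsPath ∧ G.degree f = 1 ∧ u ∈ W.support ∧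
      bends M.toFun W.support = n} := by
  refine ⟨Fintype.card V, ?_⟩
  rintro n ⟨f, W, hp, -, -, rfl⟩
  have h1 := bends_le_length M.toFun W.support
  have h2 := W.length_support
  have h3 := hp.length_lt
  omega

lemma le_leafBend (M : SModel G) {p u f : V} (W : G.Walk p f) (hp : W.IsPath)
    (hf : G.degree f = 1) (hu : u ∈ W.support) :
    bends M.toFun W.support ≤ leafBend M p u :=
  le_csSup (leafBend_bddAbove M p u) ⟨f, W, hp, hf, hu, rfl⟩

lemma leafBend_attained (hT : G.IsTree) (M : SModel G) {v u : V} (h1 : G.Adj v u) :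
    ∃ (f : V) (W : G.Walk v f), W.IsPath ∧ G.degree f = 1 ∧ u ∈ W.support ∧
      bends M.toFun W.support = leafBend M v u := by
  obtain ⟨f0, W0, hp0, hl0, hu0⟩ := exists_leaf_path hT h1
  have hne : Set.Nonempty {n | ∃ (f : V) (W : G.Walk v f), W.IsPath ∧ G.degree f = 1 ∧
      u ∈ W.support ∧ bends M.toFun W.support = n} := ⟨_, f0, W0, hp0, hl0, hu0, rfl⟩
  exact Nat.sSup_mem hne (leafBend_bddAbove M v u)

end GraphAux

theorem stmt_6 {V : Type*} [Fintype V] (G : SimpleGraph V) [DecidableRel G.Adj]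
    (hT : G.IsTree) (hdeg : ∀ v, G.degree v ≤ 4) (M : SModel G)
    (v u1 u2 : V) (hnb : ¬ BalancedAt M v)
    (h1 : G.Adj v u1) (h2 : G.Adj v u2) (h12 : u1 ≠ u2)
    (h21 : leafBend M v u2 ≤ leafBend M v u1)
    (htop : ∀ w, G.Adj v w → w ≠ u1 → w ≠ u2 → leafBend M v w ≤ leafBend M v u2) :
    bendNumAt M v = leafBend M v u1 + leafBend M v u2 + 1 := by
  classical
  have hdegv : 2 ≤ G.degree v := two_le_degree h1 h2 h12
  -- v is not collinear with u1, u2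
  have hncol : ¬ collinearGrid (M.toFun u1) (M.toFun v) (M.toFun u2) := by
    intro hcol
    refine hnb (Or.inr ⟨u1, u2, h12, h1, h2, hcol, fun w hw hw1 hw2 => ?_⟩)
    exact le_min ((htop w hw hw1 hw2).trans h21) (htop w hw hw1 hw2)
  have hbend : bendAt M.toFun u1 v u2 := by
    unfold collinearGrid at hncol
    unfold bendAt
    rcases M.axisAligned h1 with ⟨hx, -⟩ | ⟨hy, -⟩ <;>
      rcases M.axisAligned h2 with ⟨hx2, -⟩ | ⟨hy2, -⟩
    · exact absurd (Or.inl ⟨hx.symm, hx2⟩) hncol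
    · exact Or.inl ⟨hx.symm, hy2⟩
    · exact Or.inr ⟨hy.symm, hx2⟩
    · exact absurd (Or.inr ⟨hy.symm, hy2⟩) hncol
  -- neighbor bounds
  have hle1 : ∀ w, G.Adj v w → leafBend M v w ≤ leafBend M v u1 := by
    intro w hw
    by_cases e1 : w = u1
    · subst e1; exact le_rfl
    by_cases e2 : w = u2
    · subst e2; exact h21
    · exact (htop w hw e1 e2).trans h21
  have hle2 : ∀ w, G.Adj v w → w ≠ u1 → leafBend M v w ≤ leafBend M v u2 := by
    intro w hw e1
    by_cases e2 : w = u2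
    · subst e2; exact le_rfl
    · exact htop w hw e1 e2
  -- the witness path
  obtain ⟨f1, W1, hp1, hl1, hu1mem, hb1⟩ := leafBend_attained hT M h1
  obtain ⟨f2, W2, hp2, hl2, hu2mem, hb2⟩ := leafBend_attained hT M h2
  have hf1v : v ≠ f1 := by
    rintro rfl
    rw [Walk.isPath_iff_eq_nil] at hp1
    subst hp1
    simp at hu1mem
    exact h1.ne hu1mem.symm
  have hf2v : v ≠ f2 := by
    rintro rfl
    rw [Walk.isPath_iff_eq_nil] at hp2
    subst hp2
    simp at hu2mem
    exact h2.ne hu2mem.symm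
  obtain ⟨s1, ha1, Q1, rfl⟩ := walk_cons_of_ne W1 hf1v
  obtain ⟨s2, ha2, Q2, rfl⟩ := walk_cons_of_ne W2 hf2v
  have hu1Q : u1 ∈ Q1.support := by
    rcases (by simpa [Walk.support_cons] using hu1mem : u1 = v ∨ u1 ∈ Q1.support) with h | h
    · exact absurd h.symm h1.ne
    · exact h
  have hu2Q : u2 ∈ Q2.support := by
    rcases (by simpa [Walk.support_cons] using hu2mem : u2 = v ∨ u2 ∈ Q2.support) with h | h
    · exact absurd h.symm h2.ne
    · exact h
  have hs1 : u1 = s1 := (second_vertex' hT h1 ha1 Q1 hp1 hu1Q).symm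
  subst hs1
  have hs2 : u2 = s2 := (second_vertex' hT h2 ha2 Q2 hp2 hu2Q).symm
  subst hs2
  obtain ⟨t1, ht1⟩ : ∃ t1, Q1.support = u1 :: t1 := ⟨_, Q1.support_eq_cons⟩
  obtain ⟨t2, ht2⟩ : ∃ t2, Q2.support = u2 :: t2 := ⟨_, Q2.support_eq_cons⟩
  have hdisj := paths_disjoint hT h12 ha1 ha2 Q1 Q2 hp1 hp2
  set X := (Walk.cons ha1 Q1).reverse.append (Walk.cons ha2 Q2) with hX
  have hXsup : X.support = t1.reverse ++ [u1, v] ++ u2 :: t2 := by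
    rw [hX, Walk.support_append, Walk.support_reverse, Walk.support_cons, Walk.support_cons,
      List.tail_cons, ht1, ht2]
    simp
  have hXpath : X.IsPath := by
    rw [Walk.isPath_def, hX, Walk.support_append, Walk.support_reverse, Walk.support_cons,
      Walk.support_cons, List.tail_cons]
    refine List.Nodup.append ?_ ?_ ?_
    · rw [List.nodup_reverse]
      exact hp1.support_nodup
    · exact hp2.of_cons.support_nodup
    · intro x hx hx2
      rw [List.mem_reverse] at hx
      rcases List.mem_cons.mp hx with rfl | hx1
      · exact ((Walk.cons_isPath_iff ha2 Q2).mp hp2).2 hx2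
      · exact hdisj x hx1 hx2
  have hbX : bends M.toFun X.support = leafBend M v u1 + leafBend M v u2 + 1 := by
    rw [hXsup, bends_junction, if_pos hbend]
    have e1 : t1.reverse ++ [u1, v] = (v :: u1 :: t1).reverse := by simp
    have e2 : (Walk.cons ha1 Q1).support = v :: u1 :: t1 := by rw [Walk.support_cons, ht1]
    have e3 : (Walk.cons ha2 Q2).support = v :: u2 :: t2 := by rw [Walk.support_cons, ht2]
    rw [e1, bends_reverse, ← e2, ← e3, hb1, hb2]
    omega
  have hvX : v ∈ X.support := by rw [hXsup]; simp
  have hSbdd : BddAbove {n | ∃ (a b : V) (W : G.Walk a b), W.IsPath ∧ G.degree a = 1 ∧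
      G.degree b = 1 ∧ v ∈ W.support ∧ bends M.toFun W.support = n} := by
    refine ⟨Fintype.card V, ?_⟩
    rintro n ⟨a, b, W, hp, -, -, -, rfl⟩
    have h1' := bends_le_length M.toFun W.support
    have h2' := W.length_support
    have h3' := hp.length_lt
    omega
  have hmem : leafBend M v u1 + leafBend M v u2 + 1 ∈ {n | ∃ (a b : V) (W : G.Walk a b),
      W.IsPath ∧ G.degree a = 1 ∧ G.degree b = 1 ∧ v ∈ W.support ∧
      bends M.toFun W.support = n} :=
    ⟨f1, f2, X, hXpath, hl1, hl2, hvX, hbX⟩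
  have hup : ∀ n ∈ {n | ∃ (a b : V) (W : G.Walk a b), W.IsPath ∧ G.degree a = 1 ∧
      G.degree b = 1 ∧ v ∈ W.support ∧ bends M.toFun W.support = n},
      n ≤ leafBend M v u1 + leafBend M v u2 + 1 := by
    rintro n ⟨a, b, W, hp, hda, hdb, hvW, rfl⟩
    have hva : v ≠ a := by rintro rfl; omega
    have hvb : v ≠ b := by rintro rfl; omega
    have hspec := W.take_spec hvW
    have hp1' : (W.takeUntil v hvW).IsPath := hp.takeUntil hvW
    have hp2' : (W.dropUntil v hvW).IsPath := hp.dropUntil hvW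
    obtain ⟨w1, hw1, R1, hR1⟩ := walk_cons_of_ne (W.takeUntil v hvW).reverse hva
    obtain ⟨w2, hw2, R2, hR2⟩ := walk_cons_of_ne (W.dropUntil v hvW) hvb
    obtain ⟨r1, hr1⟩ : ∃ r1, R1.support = w1 :: r1 := ⟨_, R1.support_eq_cons⟩
    obtain ⟨r2, hr2⟩ : ∃ r2, R2.support = w2 :: r2 := ⟨_, R2.support_eq_cons⟩
    have hh := Walk.support_reverse (W.takeUntil v hvW)
    rw [hR1, Walk.support_cons, hr1] at hh
    have hT1 : (W.takeUntil v hvW).support = (v :: w1 :: r1).reverse := by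
      rw [hh, List.reverse_reverse]
    have hWsup : W.support = r1.reverse ++ [w1, v] ++ w2 :: r2 := by
      rw [← hspec, Walk.support_append, hT1, hR2, Walk.support_cons, List.tail_cons, hr2]
      simp
    have hbd1 : bends M.toFun (r1.reverse ++ [w1, v]) ≤ leafBend M v w1 := by
      have e1 : r1.reverse ++ [w1, v] = (v :: w1 :: r1).reverse := by simp
      have e2 : (W.takeUntil v hvW).reverse.support = v :: w1 :: r1 := by
        rw [hR1, Walk.support_cons, hr1]
      rw [e1, bends_reverse, ← e2]
      exact le_leafBend M _ hp1'.reverse hda (by rw [e2]; simp)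
    have hbd2 : bends M.toFun (v :: w2 :: r2) ≤ leafBend M v w2 := by
      have e3 : (W.dropUntil v hvW).support = v :: w2 :: r2 := by
        rw [hR2, Walk.support_cons, hr2]
      rw [← e3]
      exact le_leafBend M _ hp2' hdb (by rw [e3]; simp)
    have hnodup := hp.support_nodup
    rw [hWsup] at hnodup
    have hww : w1 ≠ w2 := by
      intro h
      have hdisj' := List.disjoint_of_nodup_append hnodup
      exact hdisj' (a := w1) (by simp) (by simp [h])
    have hpair : leafBend M v w1 + leafBend M v w2 ≤
        leafBend M v u1 + leafBend M v u2 := by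
      by_cases hcase : w1 = u1
      · have hw2ne : w2 ≠ u1 := by rw [← hcase]; exact hww.symm
        have hb1' := hle2 w2 hw2 hw2ne
        have hb2' := hle1 w1 hw1
        omega
      · have hb1' := hle2 w1 hw1 hcase
        have hb2' := hle1 w2 hw2
        omega
    rw [hWsup, bends_junction]
    have hite : (if bendAt M.toFun w1 v w2 then 1 else 0) ≤ 1 := by split <;> omega
    omega
  unfold bendNumAt
  exact le_antisymm (csSup_le ⟨_, hmem⟩ hup) (le_csSup hSbdd hmem)
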